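/- If f : ℝ≥0 → ℝ≥0 is a nondecreasing function satisfying ∫₁^∞ (f(t)/t)^p dt/t < ∞ for some p ≥ 1, then f(t)/t is bounded, i.e. there exists C > 0 with f(t) ≤ C·t for all t ≥ 1. -/

import Mathlib

open MeasureTheory Set

/-- If a nondecreasing nonnegative `f` satisfies `∫₁^∞ (f t / t)^p dt/t < ∞` for some
`p ≥ 1`, then `f(t)/t` is bounded: there is `C > 0` with `f t ≤ C * t` for all `t ≥ 1`. -/
theorem stmt1 (f : ℝ → ℝ) (hf : Monotone f) (hf0 : ∀ t, 0 ≤ f t)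
    (p : ℝ) (hp : 1 ≤ p)
    (hCp : IntegrableOn (fun t => (f t / t) ^ p * (1 / t)) (Ici (1 : ℝ))) :
    ∃ C > 0, ∀ t : ℝ, 1 ≤ t → f t ≤ C * t := by
  have hp0 : (0:ℝ) < p := lt_of_lt_of_le one_pos hp
  set I := ∫ t in Ici (1:ℝ), (f t / t) ^ p * (1 / t) with hIdef
  have hI0 : 0 ≤ I := by
    apply setIntegral_nonneg measurableSet_Ici
    intro t ht
    have ht0 : (0:ℝ) < t := lt_of_lt_of_le one_pos ht
    have := hf0 t
    positivity
  refine ⟨2 * (2 * I) ^ p⁻¹ + 1, by positivity, fun t ht => ?_⟩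
  have ht0 : (0:ℝ) < t := lt_of_lt_of_le one_pos ht
  have ht2 : (0:ℝ) < 2 * t := by linarith
  have nn : ∀ s ∈ Ici (1:ℝ), 0 ≤ (f s / s) ^ p * (1 / s) := by
    intro s hs
    have hs0 : (0:ℝ) < s := lt_of_lt_of_le one_pos hs
    have := hf0 s
    positivity
  have hsub : Icc t (2*t) ⊆ Ici (1:ℝ) := fun s hs => le_trans ht hs.1
  have h2 : (∫ s in Icc t (2*t), (f s / s) ^ p * (1 / s)) ≤ I := by
    rw [hIdef]
    apply setIntegral_mono_set hCp
    · filter_upwards [ae_restrict_mem measurableSet_Ici] with s hs using nn s hs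
    · exact HasSubset.Subset.eventuallyLE hsub
  have h1 : (∫ s in Icc t (2*t), (f t / (2*t)) ^ p * (1 / (2*t)))
      ≤ ∫ s in Icc t (2*t), (f s / s) ^ p * (1 / s) := by
    apply setIntegral_mono_on
    · exact integrableOn_const (by simp [Real.volume_Icc]) enorm_ne_top
    · exact hCp.mono_set hsub
    · exact measurableSet_Icc
    · intro s hs
      have hs0 : (0:ℝ) < s := lt_of_lt_of_le ht0 hs.1
      have hfts : f t ≤ f s := hf hs.1
      have hbase : f t / (2*t) ≤ f s / s :=
        div_le_div₀ (hf0 s) hfts hs0 hs.2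
      have h0 : 0 ≤ f t / (2*t) := by have := hf0 t; positivity
      have hr : (f t / (2*t)) ^ p ≤ (f s / s) ^ p :=
        Real.rpow_le_rpow h0 hbase hp0.le
      have hinv : 1/(2*t) ≤ 1/s := one_div_le_one_div_of_le hs0 hs.2
      exact mul_le_mul hr hinv (by positivity) (Real.rpow_nonneg (div_nonneg (hf0 s) hs0.le) p)
  have hconst : (∫ s in Icc t (2*t), (f t / (2*t)) ^ p * (1 / (2*t)))
      = t * ((f t / (2*t)) ^ p * (1 / (2*t))) := by
    rw [setIntegral_const, measureReal_def, Real.volume_Icc]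
    rw [ENNReal.toReal_ofReal (by linarith)]
    rw [smul_eq_mul]
    ring
  have key : (f t / (2*t)) ^ p ≤ 2 * I := by
    have := hconst ▸ (h1.trans h2)
    have heq : t * ((f t / (2*t)) ^ p * (1 / (2*t))) = (f t / (2*t)) ^ p / 2 := by
      field_simp
    rw [heq] at this
    linarith
  have h0 : 0 ≤ f t / (2*t) := by have := hf0 t; positivity
  have hroot : f t / (2*t) ≤ (2*I) ^ p⁻¹ := by
    have := Real.rpow_le_rpow (by positivity) key (by positivity : (0:ℝ) ≤ p⁻¹)
    rwa [Real.rpow_rpow_inv h0 hp0.ne'] at this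
  calc f t = (f t / (2*t)) * (2*t) := by field_simp
    _ ≤ (2*I) ^ p⁻¹ * (2*t) := by nlinarith [hroot]
    _ ≤ (2 * (2 * I) ^ p⁻¹ + 1) * t := by nlinarith [Real.rpow_nonneg (by linarith : (0:ℝ) ≤ 2*I) p⁻¹]
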